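/- Let a₁, b₁, c₁, d₁, a₂, b₂, c₂, d₂ ∈ ℝ satisfy a₁d₁ − b₁c₁ = 1, a₂d₂ − b₂c₂ = 1, c₁ ≠ 0 and c₂ ≠ 0, and set a₃ = a₁a₂ + b₂c₁ and c₃ = a₁c₂ + c₁d₂ (the corresponding entries of the matrix product of (a₂,b₂;c₂,d₂) with (a₁,b₁;c₁,d₁)). Then there exists an integer m such that for every t ∈ ℝ with c₂ t ≠ a₂ and c₃ t ≠ a₃: sgn(c₃) Θ(c₃ t − a₃) − sgn(c₂) Θ(c₂ t − a₂) − sgn(c₁) Θ((c₃ t − a₃)/(a₂ − c₂ t)) = m. -/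
import Mathlib


/-- Heaviside step function: `Θ(x) = 1` if `x > 0` and `Θ(x) = 0` otherwise. -/
noncomputable def heaviside (x : ℝ) : ℝ := if 0 < x then 1 else 0

lemma heaviside_div' (x y : ℝ) : heaviside (x / y) = heaviside (x * y) := by
  unfold heaviside
  simp only [div_pos_iff, mul_pos_iff]

set_option maxHeartbeats 2000000 in
/-- Core computation: if `c₂ X₃ - c₃ X₂ = c₁` with `c₁, c₂, X₂, X₃` nonzero, then
the phase expression takes the value `(s₃ - s₂ + s₁ s₂ s₃ - s₁)/2`, which only
depends on the signs of the `cᵢ`. -/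
lemma phase_key (c₁ c₂ c₃ X₂ X₃ : ℝ) (hc1 : c₁ ≠ 0) (hc2 : c₂ ≠ 0)
    (hX2 : X₂ ≠ 0) (hX3 : X₃ ≠ 0) (hrel : c₂ * X₃ - c₃ * X₂ = c₁) :
    Real.sign c₃ * heaviside X₃ - Real.sign c₂ * heaviside X₂ -
      Real.sign c₁ * heaviside (X₃ / -X₂) =
    (Real.sign c₃ - Real.sign c₂ + Real.sign c₁ * Real.sign c₂ * Real.sign c₃
      - Real.sign c₁) / 2 := by
  rw [heaviside_div']
  rcases hX2.lt_or_gt with p2 | p2 <;>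
  rcases hX3.lt_or_gt with p3 | p3 <;>
  · simp only [heaviside, Real.sign]
    split_ifs <;>
    first
      | (norm_num; done)
      | linarith
      | nlinarith [hrel]

lemma exists_int_half (c₁ c₂ c₃ : ℝ) (hc1 : c₁ ≠ 0) (hc2 : c₂ ≠ 0) :
    ∃ m : ℤ, (Real.sign c₃ - Real.sign c₂ +
      Real.sign c₁ * Real.sign c₂ * Real.sign c₃ - Real.sign c₁) / 2 = (m : ℝ) := by
  have e1 : Real.sign c₁ = -1 ∨ Real.sign c₁ = 1 :=
    hc1.lt_or_gt.imp Real.sign_of_neg Real.sign_of_pos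
  have e2 : Real.sign c₂ = -1 ∨ Real.sign c₂ = 1 :=
    hc2.lt_or_gt.imp Real.sign_of_neg Real.sign_of_pos
  have e3 : Real.sign c₃ = -1 ∨ Real.sign c₃ = 0 ∨ Real.sign c₃ = 1 := by
    rcases lt_trichotomy c₃ 0 with h | h | h
    · exact Or.inl (Real.sign_of_neg h)
    · exact Or.inr (Or.inl (by rw [h, Real.sign_zero]))
    · exact Or.inr (Or.inr (Real.sign_of_pos h))
  rcases e1 with e1 | e1 <;> rcases e2 with e2 | e2 <;> rcases e3 with e3 | e3 | e3 <;>
    rw [e1, e2, e3] <;>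
    first
      | (refine ⟨-2, ?_⟩; norm_num; done)
      | (refine ⟨-1, ?_⟩; norm_num; done)
      | (refine ⟨0, ?_⟩; norm_num; done)
      | (refine ⟨1, ?_⟩; norm_num; done)
      | (refine ⟨2, ?_⟩; norm_num; done)

/-- Constancy of the universal-cover phase under composition of Möbius maps (Appendix C.1):
with `a₃ = a₁a₂ + b₂c₁` and `c₃ = a₁c₂ + c₁d₂` the entries of the matrix product, the
integer-valued function
`sgn(c₃) Θ(c₃t - a₃) - sgn(c₂) Θ(c₂t - a₂) - sgn(c₁) Θ((c₃t - a₃)/(a₂ - c₂t))`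
is constant in `t`. -/
theorem universal_cover_phase_constant
    (a₁ b₁ c₁ d₁ a₂ b₂ c₂ d₂ : ℝ)
    (h1 : a₁ * d₁ - b₁ * c₁ = 1) (h2 : a₂ * d₂ - b₂ * c₂ = 1)
    (hc1 : c₁ ≠ 0) (hc2 : c₂ ≠ 0) :
    ∃ m : ℤ, ∀ t : ℝ, c₂ * t ≠ a₂ → (a₁ * c₂ + c₁ * d₂) * t ≠ a₁ * a₂ + b₂ * c₁ →
      Real.sign (a₁ * c₂ + c₁ * d₂) *
          heaviside ((a₁ * c₂ + c₁ * d₂) * t - (a₁ * a₂ + b₂ * c₁)) -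
        Real.sign c₂ * heaviside (c₂ * t - a₂) -
        Real.sign c₁ *
          heaviside (((a₁ * c₂ + c₁ * d₂) * t - (a₁ * a₂ + b₂ * c₁)) / (a₂ - c₂ * t)) =
      (m : ℝ) := by
  obtain ⟨m, hm⟩ := exists_int_half c₁ c₂ (a₁ * c₂ + c₁ * d₂) hc1 hc2
  refine ⟨m, fun t ht2 ht3 => ?_⟩
  have hX2 : c₂ * t - a₂ ≠ 0 := sub_ne_zero.2 ht2
  have hX3 : (a₁ * c₂ + c₁ * d₂) * t - (a₁ * a₂ + b₂ * c₁) ≠ 0 := sub_ne_zero.2 ht3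
  have hrel : c₂ * ((a₁ * c₂ + c₁ * d₂) * t - (a₁ * a₂ + b₂ * c₁)) -
      (a₁ * c₂ + c₁ * d₂) * (c₂ * t - a₂) = c₁ := by linear_combination c₁ * h2
  have hden : a₂ - c₂ * t = -(c₂ * t - a₂) := by ring
  rw [hden, ← hm]
  exact phase_key c₁ c₂ (a₁ * c₂ + c₁ * d₂) (c₂ * t - a₂)
    ((a₁ * c₂ + c₁ * d₂) * t - (a₁ * a₂ + b₂ * c₁)) hc1 hc2 hX2 hX3 hrel
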